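/- Let 1 < p < ∞ with p ≠ 2 and let k > 1. In (ℝ², ‖·‖_p), the unit vector (x_1, y_1) = ( -k^{p-1}/(1+k^{p(p-1)})^{1/p}, 1/(1+k^{p(p-1)})^{1/p} ) is NOT Birkhoff-James orthogonal to the unit vector (x_0, y_0) = (1/(1+k^p)^{1/p}, k/(1+k^p)^{1/p}); that is, there exists a scalar λ with ‖(x_1, y_1) + λ(x_0, y_0)‖_p < 1. -/

import Mathlib

noncomputable def vecP (p : ℝ) (a b : ℝ) : PiLp (ENNReal.ofReal p) (fun _ : Fin 2 => ℝ) :=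
  (WithLp.equiv (ENNReal.ofReal p) (Fin 2 → ℝ)).symm ![a, b]

theorem stmt_7 (p : ℝ) (hp : 1 < p) (hp2 : p ≠ 2) (k : ℝ) (hk : 1 < k)
    [Fact (1 ≤ ENNReal.ofReal p)] :
    ∃ l : ℝ,
      ‖vecP p (-(k ^ (p - 1)) / (1 + k ^ (p * (p - 1))) ^ (1 / p))
            (1 / (1 + k ^ (p * (p - 1))) ^ (1 / p)) +
          l • vecP p (1 / (1 + k ^ p) ^ (1 / p)) (k / (1 + k ^ p) ^ (1 / p))‖ < 1 := by
  have hp0 : 0 < p := lt_trans one_pos hp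
  have hk0 : 0 < k := lt_trans one_pos hk
  have hSbase : (0:ℝ) < 1 + k ^ (p * (p - 1)) := by positivity
  set S : ℝ := (1 + k ^ (p * (p - 1))) ^ (1 / p) with hSdef
  set T : ℝ := (1 + k ^ p) ^ (1 / p) with hTdef
  have hS0 : 0 < S := by positivity
  have hT0 : 0 < T := by positivity
  set a : ℝ := k ^ (p - 1) / S with hadef
  set b : ℝ := 1 / T with hbdef
  set c : ℝ := 1 / S with hcdef
  set d : ℝ := k / T with hddef
  have ha : 0 < a := by positivity
  have hb : 0 < b := by positivity
  have hc : 0 < c := by positivity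
  have hd : 0 < d := by positivity
  set f : ℝ → ℝ := fun l => (a - l * b) ^ p + (c + l * d) ^ p with hfdef
  -- f 0 = 1
  have hSp : S ^ p = 1 + k ^ (p * (p - 1)) := by
    rw [hSdef, ← Real.rpow_mul hSbase.le, one_div_mul_cancel hp0.ne', Real.rpow_one]
  have hap : a ^ p = k ^ (p * (p - 1)) / S ^ p := by
    rw [hadef, Real.div_rpow (by positivity) hS0.le, ← Real.rpow_mul hk0.le, mul_comm (p-1) p]
  have hf0 : f 0 = 1 := by
    simp only [hfdef, zero_mul, sub_zero, add_zero, hap, hSp, hcdef,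
      Real.div_rpow (zero_le_one) hS0.le, Real.one_rpow]
    rw [← add_div, add_comm, div_self hSbase.ne']
  -- derivative of f at 0
  set D : ℝ := p * a ^ (p - 1) * (-b) + p * c ^ (p - 1) * d with hDdef
  have hderiv : HasDerivAt f D 0 := by
    have h1 : HasDerivAt (fun l : ℝ => a - l * b) (-b) 0 := by
      simpa using ((hasDerivAt_id (0:ℝ)).mul_const b).const_sub a
    have h2 : HasDerivAt (fun l : ℝ => c + l * d) d 0 := by
      simpa using ((hasDerivAt_id (0:ℝ)).mul_const d).const_add c
    have g1 := (Real.hasDerivAt_rpow_const (x := a - 0 * b) (p := p)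
      (Or.inl (by simpa using ha.ne'))).comp 0 h1
    have g2 := (Real.hasDerivAt_rpow_const (x := c + 0 * d) (p := p)
      (Or.inl (by simpa using hc.ne'))).comp 0 h2
    have := g1.add g2
    show HasDerivAt (((fun x : ℝ => x ^ p) ∘ fun l => a - l * b) + (fun x : ℝ => x ^ p) ∘ fun l => c + l * d) D 0
    simpa [hDdef, Function.comp, mul_comm, mul_assoc, mul_left_comm] using this
  -- D ≠ 0
  have hane : a ^ (p - 1) ≠ c ^ (p - 1) * k := by
    have h1 : a ^ (p - 1) = k ^ ((p - 1) * (p - 1)) / S ^ (p - 1) := by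
      rw [hadef, Real.div_rpow (by positivity) hS0.le, ← Real.rpow_mul hk0.le]
    have h2 : c ^ (p - 1) = 1 / S ^ (p - 1) := by
      rw [hcdef, Real.div_rpow zero_le_one hS0.le, Real.one_rpow]
    rw [h1, h2]
    have hexp : (p - 1) * (p - 1) ≠ 1 := by
      intro h
      rcases mul_self_eq_one_iff.1 h with h' | h' <;> [exact hp2 (by linarith); linarith]
    have hkne : k ^ ((p - 1) * (p - 1)) ≠ k := by
      intro h
      apply hexp
      have : k ^ ((p - 1) * (p - 1)) = k ^ (1:ℝ) := by rwa [Real.rpow_one]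
      rcases lt_trichotomy ((p-1)*(p-1)) 1 with hlt | heq | hgt
      · exact absurd ((Real.rpow_lt_rpow_left_iff hk).2 hlt) (by rw [this]; exact lt_irrefl _)
      · exact heq
      · exact absurd ((Real.rpow_lt_rpow_left_iff hk).2 hgt) (by rw [this]; exact lt_irrefl _)
    have hSp1 : S ^ (p - 1) ≠ 0 := by positivity
    intro h
    apply hkne
    field_simp [hSp1] at h
    rw [← sq]; linarith
  have hDne : D ≠ 0 := by
    intro h
    apply hane
    rw [hDdef] at h
    have h' : p * a ^ (p - 1) * b = p * c ^ (p - 1) * d := by linarith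
    rw [hbdef, hddef] at h'
    have hT' : T ≠ 0 := hT0.ne'
    field_simp at h'
    exact h'
  -- existence of good l
  obtain ⟨l, hl1, hl2, hlf⟩ : ∃ l, 0 < a - l * b ∧ 0 < c + l * d ∧ f l < 1 := by
    by_contra hcon
    push_neg at hcon
    have hnhd : ∀ᶠ l in nhds (0:ℝ), 0 < a - l * b ∧ 0 < c + l * d := by
      have e1 : ∀ᶠ l in nhds (0:ℝ), 0 < a - l * b := by
        have : ContinuousAt (fun l : ℝ => a - l * b) 0 := by fun_prop
        have := this.eventually_mem (s := Set.Ioi 0) ?_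
        · simpa [Set.mem_Ioi] using this
        · exact isOpen_Ioi.mem_nhds (by simpa using ha)
      have e2 : ∀ᶠ l in nhds (0:ℝ), 0 < c + l * d := by
        have : ContinuousAt (fun l : ℝ => c + l * d) 0 := by fun_prop
        have := this.eventually_mem (s := Set.Ioi 0) ?_
        · simpa [Set.mem_Ioi] using this
        · exact isOpen_Ioi.mem_nhds (by simpa using hc)
      exact e1.and e2
    have hmin : IsLocalMin f 0 := by
      rw [IsLocalMin, IsMinFilter]
      filter_upwards [hnhd] with l hl
      rw [hf0]
      exact hcon l hl.1 hl.2
    exact hDne (hmin.hasDerivAt_eq_zero hderiv)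
  refine ⟨l, ?_⟩
  have htr : (ENNReal.ofReal p).toReal = p := ENNReal.toReal_ofReal hp0.le
  have hnorm : ‖vecP p (-(k ^ (p - 1)) / S) (1 / S) + l • vecP p (1 / T) (k / T)‖
      = (|(-(k ^ (p - 1)) / S) + l * (1 / T)| ^ p + |1 / S + l * (k / T)| ^ p) ^ (1/p) := by
    rw [PiLp.norm_eq_sum (by rw [htr]; exact hp0)]
    simp [vecP, Fin.sum_univ_two, htr, Real.norm_eq_abs, WithLp.equiv_symm_apply, PiLp.toLp_apply, mul_comm]
  rw [hnorm]
  have e1 : |(-(k ^ (p - 1)) / S) + l * (1 / T)| = a - l * b := by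
    have : (-(k ^ (p - 1)) / S) + l * (1 / T) = -(a - l * b) := by
      rw [hadef, hbdef]; ring
    rw [this, abs_neg, abs_of_pos hl1]
  have e2 : |1 / S + l * (k / T)| = c + l * d := by
    have : 1 / S + l * (k / T) = c + l * d := by rw [hcdef, hddef]
    rw [this, abs_of_pos hl2]
  rw [e1, e2]
  calc (f l) ^ (1/p) < 1 ^ (1/p) := by
        apply Real.rpow_lt_rpow (by positivity) hlf (by positivity)
    _ = 1 := Real.one_rpow _
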